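/- Let X ~ Bin(p_1, …, p_n), Z ~ Bin(d/n, …, d/n) with d = Σ p_i and p_max = max_i p_i. Then for every integer k, |P(X = k) − P(Z = k)| ≤ 2 d p_max · exp(−d·h(((k − 2 − d)/d)₊)) and |P(X > k−1) − P(Z > k−1)| ≤ d p_max · exp(−d·h(((k − 2 − d)/d)₊)), where h(x) = (1+x)log(1+x) − x. -/

import Mathlib

open Finset Real

/-- The probability that the sum of independent Bernoulli(`p l`) variables over
indices `l ∈ s` equals `t` (zero for `t < 0`). -/
noncomputable def binProbOn {ι : Type*} [DecidableEq ι] (s : Finset ι) (p : ι → ℝ) (t : ℤ) : ℝ :=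
  ∑ S ∈ s.powerset.filter (fun S => (S.card : ℤ) = t), (∏ l ∈ S, p l) * ∏ l ∈ s \ S, (1 - p l)

/-- `h(x) = (1+x) log(1+x) − x`. -/
noncomputable def bennettH (x : ℝ) : ℝ := (1 + x) * Real.log (1 + x) - x

section lemmas
variable {ι : Type*} [DecidableEq ι] {s : Finset ι} {p q : ι → ℝ} {t k m : ℤ}

lemma binProbOn_congr (h : ∀ l ∈ s, p l = q l) : binProbOn s p t = binProbOn s q t := by
  unfold binProbOn
  refine Finset.sum_congr rfl fun S hS => ?_
  simp only [mem_filter, mem_powerset] at hS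
  have h1 : ∏ l ∈ S, p l = ∏ l ∈ S, q l :=
    Finset.prod_congr rfl fun l hl => h l (hS.1 hl)
  have h2 : ∏ l ∈ s \ S, (1 - p l) = ∏ l ∈ s \ S, (1 - q l) :=
    Finset.prod_congr rfl fun l hl => by rw [h l (mem_sdiff.mp hl).1]
  rw [h1, h2]

lemma binProbOn_nonneg (h : ∀ l ∈ s, 0 ≤ p l ∧ p l ≤ 1) : 0 ≤ binProbOn s p t := by
  refine Finset.sum_nonneg fun S hS => ?_
  simp only [mem_filter, mem_powerset] at hS
  exact mul_nonneg (Finset.prod_nonneg fun l hl => (h l (hS.1 hl)).1)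
    (Finset.prod_nonneg fun l hl => by linarith [(h l (mem_sdiff.mp hl).1).2])

lemma binProbOn_eq_zero (h : t < 0 ∨ (s.card : ℤ) < t) : binProbOn s p t = 0 := by
  unfold binProbOn
  rw [Finset.sum_eq_zero]
  intro S hS
  simp only [mem_filter, mem_powerset] at hS
  exfalso
  have := Finset.card_le_card hS.1
  have h2 := hS.2
  omega

lemma binProbOn_insert {u : Finset ι} {i : ι} (hi : i ∉ u) :
    binProbOn (insert i u) p t =
      p i * binProbOn u p (t - 1) + (1 - p i) * binProbOn u p t := by
  unfold binProbOn
  rw [Finset.sum_filter, Finset.sum_filter, Finset.sum_filter,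
    Finset.sum_powerset_insert hi, Finset.mul_sum, Finset.mul_sum]
  have e1 : ∀ S ∈ u.powerset,
      (if ((insert i S).card : ℤ) = t then
          (∏ l ∈ insert i S, p l) * ∏ l ∈ insert i u \ insert i S, (1 - p l) else 0)
        = p i * (if (S.card : ℤ) = t - 1 then (∏ l ∈ S, p l) * ∏ l ∈ u \ S, (1 - p l) else 0) := by
    intro S hS
    rw [Finset.mem_powerset] at hS
    have hiS : i ∉ S := fun h => hi (hS h)
    have hc : (insert i S).card = S.card + 1 := Finset.card_insert_of_notMem hiS
    have hset : insert i u \ insert i S = u \ S := by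
      ext a
      simp only [Finset.mem_sdiff, Finset.mem_insert, not_or]
      constructor
      · rintro ⟨h1 | h1, h2, h3⟩
        · exact absurd h1 h2
        · exact ⟨h1, h3⟩
      · rintro ⟨h1, h2⟩
        exact ⟨Or.inr h1, fun h => hi (h ▸ h1), h2⟩
    rw [hset, Finset.prod_insert hiS, hc]
    by_cases h : (S.card : ℤ) = t - 1
    · rw [if_pos (by push_cast; omega), if_pos h]; ring
    · rw [if_neg (by push_cast; omega), if_neg h]; ring
  have e2 : ∀ S ∈ u.powerset,
      (if (S.card : ℤ) = t then (∏ l ∈ S, p l) * ∏ l ∈ insert i u \ S, (1 - p l) else 0)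
        = (1 - p i) * (if (S.card : ℤ) = t then (∏ l ∈ S, p l) * ∏ l ∈ u \ S, (1 - p l) else 0) := by
    intro S hS
    rw [Finset.mem_powerset] at hS
    have hiS : i ∉ S := fun h => hi (hS h)
    have hset : insert i u \ S = insert i (u \ S) := Finset.insert_sdiff_of_notMem _ hiS
    have hiuS : i ∉ u \ S := fun h => hi (Finset.mem_sdiff.mp h).1
    rw [hset, Finset.prod_insert hiuS]
    split_ifs
    · ring
    · ring
  rw [Finset.sum_congr rfl e1, Finset.sum_congr rfl e2, ← Finset.mul_sum, ← Finset.mul_sum]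
  ring

lemma binProbOn_split {i : ι} (hi : i ∈ s) :
    binProbOn s p t =
      p i * binProbOn (s.erase i) p (t - 1) + (1 - p i) * binProbOn (s.erase i) p t := by
  conv_lhs => rw [← Finset.insert_erase hi]
  exact binProbOn_insert (Finset.notMem_erase i s)

noncomputable def binTail {ι : Type*} [DecidableEq ι] (s : Finset ι) (p : ι → ℝ) (k : ℤ) : ℝ :=
  ∑' t : ℤ, if k ≤ t then binProbOn s p t else 0

lemma binTail_eq_sum {a b : ℤ} (ha : a ≤ 0) (hb : (s.card : ℤ) ≤ b) :
    binTail s p k = ∑ t ∈ Finset.Icc a b, if k ≤ t then binProbOn s p t else 0 := by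
  refine tsum_eq_sum fun t ht => ?_
  simp only [Finset.mem_Icc, not_and_or, not_le] at ht
  split_ifs with h
  · exact binProbOn_eq_zero (by omega)
  · rfl

lemma binTail_congr (h : ∀ l ∈ s, p l = q l) : binTail s p k = binTail s q k := by
  unfold binTail
  exact tsum_congr fun t => by rw [binProbOn_congr h]

lemma binTail_nonneg (h : ∀ l ∈ s, 0 ≤ p l ∧ p l ≤ 1) : 0 ≤ binTail s p k := by
  rw [binTail_eq_sum le_rfl le_rfl]
  refine Finset.sum_nonneg fun t _ => ?_
  split_ifs
  · exact binProbOn_nonneg h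
  · exact le_rfl

lemma binTail_sub : binTail s p m - binTail s p (m + 1) = binProbOn s p m := by
  rw [binTail_eq_sum (a := min m 0) (b := max (m+1) s.card) (by omega) (by omega),
    binTail_eq_sum (a := min m 0) (b := max (m+1) s.card) (by omega) (by omega),
    ← Finset.sum_sub_distrib]
  have : ∀ t ∈ Finset.Icc (min m 0) (max (m+1) (s.card:ℤ)),
      ((if m ≤ t then binProbOn s p t else 0) - (if m + 1 ≤ t then binProbOn s p t else 0))
        = if t = m then binProbOn s p t else 0 := by
    intro t _
    split_ifs with h1 h2 h3 <;> first | omega | ring | (subst h3; ring)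
  rw [Finset.sum_congr rfl this, Finset.sum_ite_eq' _ m (fun t => binProbOn s p t)]
  split_ifs with h
  · rfl
  · simp only [Finset.mem_Icc, not_and_or, not_le] at h
    exact (binProbOn_eq_zero (by omega)).symm

lemma binTail_mono : binTail s p (m + 1) ≤ binTail s p m ↔ 0 ≤ binProbOn s p m := by
  constructor <;> intro h <;> nlinarith [binTail_sub (s := s) (p := p) (m := m)]

lemma binTail_insert {u : Finset ι} {i : ι} (hi : i ∉ u) :
    binTail (insert i u) p k =
      p i * binTail u p (k - 1) + (1 - p i) * binTail u p k := by
  have hcard : ((insert i u).card : ℤ) = u.card + 1 := by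
    rw [Finset.card_insert_of_notMem hi]; push_cast; ring
  rw [binTail_eq_sum (a := -1) (b := (u.card : ℤ) + 1) (by omega) (by omega),
    binTail_eq_sum (a := -2) (b := (u.card : ℤ)) (by omega) le_rfl,
    binTail_eq_sum (a := -1) (b := (u.card : ℤ) + 1) (by omega) (by omega)]
  have e1 : ∀ t ∈ Finset.Icc (-1 : ℤ) ((u.card : ℤ) + 1),
      (if k ≤ t then binProbOn (insert i u) p t else 0)
        = p i * (if k ≤ t then binProbOn u p (t - 1) else 0)
          + (1 - p i) * (if k ≤ t then binProbOn u p t else 0) := by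
    intro t _
    split_ifs
    · exact binProbOn_insert hi
    · ring
  rw [Finset.sum_congr rfl e1, Finset.sum_add_distrib, ← Finset.mul_sum, ← Finset.mul_sum]
  congr 1
  congr 1
  have hmap : (Finset.Icc (-2 : ℤ) (u.card : ℤ)).map (addRightEmbedding 1)
      = Finset.Icc (-1 : ℤ) ((u.card : ℤ) + 1) := by
    rw [Finset.map_add_right_Icc]; norm_num
  rw [← hmap, Finset.sum_map]
  refine Finset.sum_congr rfl fun t _ => ?_
  simp only [addRightEmbedding_apply]
  have h1 : t + 1 - 1 = t := by ring
  rw [h1]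
  by_cases h : k ≤ t + 1
  · rw [if_pos h, if_pos (by omega)]
  · rw [if_neg h, if_neg (by omega)]

lemma binTail_split {i : ι} (hi : i ∈ s) :
    binTail s p k = p i * binTail (s.erase i) p (k - 1) + (1 - p i) * binTail (s.erase i) p k := by
  conv_lhs => rw [← Finset.insert_erase hi]
  exact binTail_insert (Finset.notMem_erase i s)

lemma mgf_eq (l : ℝ) :
    ∑ t ∈ Finset.Icc (0:ℤ) s.card, Real.exp (l * t) * binProbOn s p t
      = ∏ i ∈ s, ((1 - p i) + p i * Real.exp l) := by
  have h1 : ∀ i ∈ s, (1 - p i) + p i * Real.exp l = p i * Real.exp l + (1 - p i) :=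
    fun _ _ => by ring
  rw [Finset.prod_congr rfl h1, Finset.prod_add]
  have key : ∀ S ∈ s.powerset, (∏ i ∈ S, p i * Real.exp l) * ∏ i ∈ s \ S, (1 - p i)
      = Real.exp (l * (S.card : ℤ)) * ((∏ i ∈ S, p i) * ∏ i ∈ s \ S, (1 - p i)) := by
    intro S _
    rw [Finset.prod_mul_distrib, Finset.prod_const, ← Real.exp_nat_mul]
    push_cast
    ring
  rw [Finset.sum_congr rfl key]
  rw [← Finset.sum_fiberwise_of_maps_to (g := fun S : Finset ι => (S.card : ℤ))
      (t := Finset.Icc (0:ℤ) s.card) (fun S hS => by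
        rw [Finset.mem_powerset] at hS
        simp only [Finset.mem_Icc]
        exact ⟨by positivity, by exact_mod_cast Finset.card_le_card hS⟩)]
  refine Finset.sum_congr rfl fun t _ => ?_
  unfold binProbOn
  rw [Finset.mul_sum]
  refine Finset.sum_congr rfl fun S hS => ?_
  rw [Finset.mem_filter] at hS
  rw [hS.2]

lemma binTail_le_exp {l : ℝ} (hl : 0 ≤ l) (hp : ∀ i ∈ s, 0 ≤ p i ∧ p i ≤ 1) (m : ℤ) :
    binTail s p m ≤ Real.exp (-(l * m) + (∑ i ∈ s, p i) * (Real.exp l - 1)) := by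
  rw [binTail_eq_sum (le_refl 0) le_rfl]
  have step1 : ∑ t ∈ Finset.Icc (0:ℤ) s.card, (if m ≤ t then binProbOn s p t else 0)
      ≤ ∑ t ∈ Finset.Icc (0:ℤ) s.card, Real.exp (l * ((t : ℝ) - m)) * binProbOn s p t := by
    refine Finset.sum_le_sum fun t _ => ?_
    have hB := binProbOn_nonneg (p := p) (t := t) hp
    split_ifs with h
    · have hm : (m : ℝ) ≤ t := by exact_mod_cast h
      nlinarith [Real.one_le_exp (mul_nonneg hl (by linarith : (0:ℝ) ≤ (t:ℝ) - m))]
    · positivity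
  refine step1.trans ?_
  have e : ∀ t ∈ Finset.Icc (0:ℤ) s.card,
      Real.exp (l * ((t : ℝ) - m)) * binProbOn s p t
        = Real.exp (-(l * m)) * (Real.exp (l * t) * binProbOn s p t) := by
    intro t _
    rw [← mul_assoc, ← Real.exp_add]
    ring_nf
  rw [Finset.sum_congr rfl e, ← Finset.mul_sum, mgf_eq]
  have hprod : ∏ i ∈ s, ((1 - p i) + p i * Real.exp l)
      ≤ ∏ i ∈ s, Real.exp (p i * (Real.exp l - 1)) := by
    refine Finset.prod_le_prod (fun i hi => ?_) (fun i hi => ?_)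
    · nlinarith [(hp i hi).1, (hp i hi).2, Real.exp_pos l]
    · have := Real.add_one_le_exp (p i * (Real.exp l - 1))
      linarith
  calc Real.exp (-(l * m)) * ∏ i ∈ s, ((1 - p i) + p i * Real.exp l)
      ≤ Real.exp (-(l * m)) * ∏ i ∈ s, Real.exp (p i * (Real.exp l - 1)) := by
        exact mul_le_mul_of_nonneg_left hprod (Real.exp_pos _).le
    _ = Real.exp (-(l * m) + (∑ i ∈ s, p i) * (Real.exp l - 1)) := by
        rw [← Real.exp_sum, ← Real.exp_add, ← Finset.sum_mul]

lemma binTail_le_bennett {d : ℝ} (hp : ∀ i ∈ s, 0 ≤ p i ∧ p i ≤ 1)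
    (hsum : ∑ i ∈ s, p i ≤ d) (hd0 : 0 < d) (m : ℤ) :
    binTail s p m ≤ Real.exp (-(d * bennettH (max (((m : ℝ) - d) / d) 0))) := by
  by_cases hm : (m : ℝ) ≤ d
  · have hmax : max (((m : ℝ) - d) / d) 0 = 0 := by
      rw [max_eq_right]
      exact div_nonpos_of_nonpos_of_nonneg (by linarith) hd0.le
    rw [hmax]
    have : bennettH 0 = 0 := by simp [bennettH]
    rw [this]
    have h0 := binTail_le_exp le_rfl hp m
    simpa using h0
  · push_neg at hm
    set r : ℝ := (m : ℝ) / d with hr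
    have hr1 : 1 < r := (one_lt_div hd0).mpr hm
    have hr0 : 0 < r := by linarith
    set l : ℝ := Real.log r with hl
    have hl0 : 0 < l := Real.log_pos hr1
    have hexpl : Real.exp l = r := Real.exp_log hr0
    have h0 := binTail_le_exp hl0.le hp m
    refine h0.trans ?_
    rw [Real.exp_le_exp, hexpl]
    have hmono : (∑ i ∈ s, p i) * (r - 1) ≤ d * (r - 1) :=
      mul_le_mul_of_nonneg_right hsum (by linarith)
    have hmax : max (((m : ℝ) - d) / d) 0 = ((m : ℝ) - d) / d := by
      rw [max_eq_left]
      exact div_nonneg (by linarith) hd0.le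
    rw [hmax]
    have hkey : -(d * bennettH (((m : ℝ) - d) / d)) = -(l * m) + d * (r - 1) := by
      unfold bennettH
      have h1 : 1 + ((m : ℝ) - d) / d = r := by rw [hr]; field_simp; ring
      have hrd : d * r = (m : ℝ) := by rw [hr]; field_simp
      have h2 : d * (((m : ℝ) - d) / d) = (m : ℝ) - d := by field_simp
      rw [h1, hl]
      linear_combination h2 + (-(Real.log r) - 1) * hrd
    rw [hkey]
    linarith

lemma binProbOn_pair {i j : ι} (hij : i ≠ j) (hi : i ∈ s) (hj : j ∈ s) :
    binProbOn s p t =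
      p i * p j * binProbOn ((s.erase i).erase j) p (t - 2)
      + (p i * (1 - p j) + p j * (1 - p i)) * binProbOn ((s.erase i).erase j) p (t - 1)
      + (1 - p i) * (1 - p j) * binProbOn ((s.erase i).erase j) p t := by
  have hj' : j ∈ s.erase i := Finset.mem_erase.mpr ⟨hij.symm, hj⟩
  rw [binProbOn_split hi, binProbOn_split (t := t - 1) hj', binProbOn_split (t := t) hj']
  have h2 : t - 1 - 1 = t - 2 := by ring
  rw [h2]
  ring

lemma binTail_pair {i j : ι} (hij : i ≠ j) (hi : i ∈ s) (hj : j ∈ s) :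
    binTail s p k =
      p i * p j * binTail ((s.erase i).erase j) p (k - 2)
      + (p i * (1 - p j) + p j * (1 - p i)) * binTail ((s.erase i).erase j) p (k - 1)
      + (1 - p i) * (1 - p j) * binTail ((s.erase i).erase j) p k := by
  have hj' : j ∈ s.erase i := Finset.mem_erase.mpr ⟨hij.symm, hj⟩
  rw [binTail_split hi, binTail_split (k := k - 1) hj', binTail_split (k := k) hj']
  have h2 : k - 1 - 1 = k - 2 := by ring
  rw [h2]
  ring

lemma update_pair_congr {i j : ι} {a b : ℝ} (hij : i ≠ j) :
    ∀ l ∈ (s.erase i).erase j, Function.update (Function.update p i a) j b l = p l := by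
  intro l hl
  rw [Finset.mem_erase] at hl
  obtain ⟨hlj, hl⟩ := hl
  rw [Finset.mem_erase] at hl
  rw [Function.update_of_ne hlj, Function.update_of_ne hl.1]

lemma replace_point {i j : ι} {a b : ℝ} (hij : i ≠ j) (hi : i ∈ s) (hj : j ∈ s)
    (hab : a + b = p i + p j) :
    binProbOn s p t - binProbOn s (Function.update (Function.update p i a) j b) t
      = (p i * p j - a * b) * (binProbOn ((s.erase i).erase j) p (t - 2)
          - 2 * binProbOn ((s.erase i).erase j) p (t - 1)
          + binProbOn ((s.erase i).erase j) p t) := by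
  set q := Function.update (Function.update p i a) j b with hq
  have hqi : q i = a := by rw [hq, Function.update_of_ne hij, Function.update_self]
  have hqj : q j = b := by rw [hq, Function.update_self]
  rw [binProbOn_pair (p := p) hij hi hj, binProbOn_pair (p := q) hij hi hj, hqi, hqj,
    binProbOn_congr (t := t - 2) (update_pair_congr hij),
    binProbOn_congr (t := t - 1) (update_pair_congr hij),
    binProbOn_congr (t := t) (update_pair_congr hij)]
  linear_combination (binProbOn ((s.erase i).erase j) p t
      - binProbOn ((s.erase i).erase j) p (t - 1)) * hab

lemma replace_tail {i j : ι} {a b : ℝ} (hij : i ≠ j) (hi : i ∈ s) (hj : j ∈ s)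
    (hab : a + b = p i + p j) :
    binTail s p k - binTail s (Function.update (Function.update p i a) j b) k
      = (p i * p j - a * b) * (binProbOn ((s.erase i).erase j) p (k - 2)
          - binProbOn ((s.erase i).erase j) p (k - 1)) := by
  set q := Function.update (Function.update p i a) j b with hq
  have hqi : q i = a := by rw [hq, Function.update_of_ne hij, Function.update_self]
  have hqj : q j = b := by rw [hq, Function.update_self]
  rw [binTail_pair (p := p) hij hi hj, binTail_pair (p := q) hij hi hj, hqi, hqj,
    binTail_congr (k := k - 2) (update_pair_congr hij),
    binTail_congr (k := k - 1) (update_pair_congr hij),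
    binTail_congr (k := k) (update_pair_congr hij)]
  have s1 : binTail ((s.erase i).erase j) p (k - 2) - binTail ((s.erase i).erase j) p (k - 2 + 1)
      = binProbOn ((s.erase i).erase j) p (k - 2) := binTail_sub
  have s2 : binTail ((s.erase i).erase j) p (k - 1) - binTail ((s.erase i).erase j) p (k - 1 + 1)
      = binProbOn ((s.erase i).erase j) p (k - 1) := binTail_sub
  have e1 : k - 2 + 1 = k - 1 := by ring
  have e2 : k - 1 + 1 = k := by ring
  rw [e1] at s1
  rw [e2] at s2
  linear_combination (binTail ((s.erase i).erase j) p k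
      - binTail ((s.erase i).erase j) p (k - 1)) * hab
    + (p i * p j - a * b) * (s1 - s2)

lemma step_est {i j : ι} (hij : i ≠ j) (hi : i ∈ s) (hj : j ∈ s)
    (hp01 : ∀ l ∈ s, 0 ≤ p l ∧ p l ≤ 1) {a b C d : ℝ} (hd0 : 0 < d)
    (hab : a + b = p i + p j) (hC : |p i * p j - a * b| ≤ C)
    (hsum : ∑ l ∈ s, p l ≤ d) (k : ℤ) :
    |binProbOn s p k - binProbOn s (Function.update (Function.update p i a) j b) k|
      ≤ 2 * C * Real.exp (-(d * bennettH (max (((k : ℝ) - 2 - d) / d) 0))) ∧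
    |binTail s p k - binTail s (Function.update (Function.update p i a) j b) k|
      ≤ C * Real.exp (-(d * bennettH (max (((k : ℝ) - 2 - d) / d) 0))) := by
  have hsub : (s.erase i).erase j ⊆ s :=
    (Finset.erase_subset _ _).trans (Finset.erase_subset _ _)
  have hp'' : ∀ l ∈ (s.erase i).erase j, 0 ≤ p l ∧ p l ≤ 1 := fun l hl => hp01 l (hsub hl)
  have hsum'' : ∑ l ∈ (s.erase i).erase j, p l ≤ d :=
    le_trans (Finset.sum_le_sum_of_subset_of_nonneg hsub
      (fun l hls _ => (hp01 l hls).1)) hsum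
  set E := Real.exp (-(d * bennettH (max (((k : ℝ) - 2 - d) / d) 0))) with hEdef
  have hE : binTail ((s.erase i).erase j) p (k - 2) ≤ E := by
    have h := binTail_le_bennett hp'' hsum'' hd0 (k - 2)
    have harg : ((((k - 2 : ℤ) : ℝ)) - d) / d = ((k : ℝ) - 2 - d) / d := by push_cast; ring
    rwa [harg] at h
  have f1 : binTail ((s.erase i).erase j) p (k - 2) - binTail ((s.erase i).erase j) p (k - 1)
      = binProbOn ((s.erase i).erase j) p (k - 2) := by
    have h := binTail_sub (s := (s.erase i).erase j) (p := p) (m := k - 2)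
    rwa [show k - 2 + 1 = k - 1 by ring] at h
  have f2 : binTail ((s.erase i).erase j) p (k - 1) - binTail ((s.erase i).erase j) p k
      = binProbOn ((s.erase i).erase j) p (k - 1) := by
    have h := binTail_sub (s := (s.erase i).erase j) (p := p) (m := k - 1)
    rwa [show k - 1 + 1 = k by ring] at h
  have f3 : binTail ((s.erase i).erase j) p k - binTail ((s.erase i).erase j) p (k + 1)
      = binProbOn ((s.erase i).erase j) p k := binTail_sub
  have n1 : 0 ≤ binProbOn ((s.erase i).erase j) p (k - 2) := binProbOn_nonneg hp''
  have n2 : 0 ≤ binProbOn ((s.erase i).erase j) p (k - 1) := binProbOn_nonneg hp''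
  have n3 : 0 ≤ binProbOn ((s.erase i).erase j) p k := binProbOn_nonneg hp''
  have nT : 0 ≤ binTail ((s.erase i).erase j) p (k + 1) := binTail_nonneg hp''
  have hC0 : 0 ≤ C := le_trans (abs_nonneg _) hC
  have hCE : C * binTail ((s.erase i).erase j) p (k - 2) ≤ C * E :=
    mul_le_mul_of_nonneg_left hE hC0
  constructor
  · rw [replace_point hij hi hj hab, abs_mul]
    have habs : |binProbOn ((s.erase i).erase j) p (k - 2)
        - 2 * binProbOn ((s.erase i).erase j) p (k - 1)
        + binProbOn ((s.erase i).erase j) p k|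
        ≤ 2 * binTail ((s.erase i).erase j) p (k - 2) := by
      rw [abs_le]
      constructor <;> linarith
    calc |p i * p j - a * b| * |binProbOn ((s.erase i).erase j) p (k - 2)
          - 2 * binProbOn ((s.erase i).erase j) p (k - 1)
          + binProbOn ((s.erase i).erase j) p k|
        ≤ C * (2 * binTail ((s.erase i).erase j) p (k - 2)) :=
          mul_le_mul hC habs (abs_nonneg _) hC0
      _ ≤ 2 * C * E := by linarith
  · rw [replace_tail hij hi hj hab, abs_mul]
    have habs : |binProbOn ((s.erase i).erase j) p (k - 2)
        - binProbOn ((s.erase i).erase j) p (k - 1)|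
        ≤ binTail ((s.erase i).erase j) p (k - 2) := by
      rw [abs_le]
      constructor <;> linarith
    calc |p i * p j - a * b| * |binProbOn ((s.erase i).erase j) p (k - 2)
          - binProbOn ((s.erase i).erase j) p (k - 1)|
        ≤ C * binTail ((s.erase i).erase j) p (k - 2) :=
          mul_le_mul hC habs (abs_nonneg _) hC0
      _ ≤ C * E := hCE

end lemmas

theorem stmt_15 (n : ℕ) (p : Fin n → ℝ)
    (hp : ∀ l, 0 ≤ p l ∧ p l ≤ 1)
    (d pmax : ℝ) (hd : d = ∑ l, p l) (hd0 : 0 < d)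
    (hpmax : ∀ l, p l ≤ pmax) (hpmax' : ∃ l, p l = pmax) (k : ℤ) :
    |binProbOn Finset.univ p k - binProbOn Finset.univ (fun _ : Fin n => d / n) k| ≤
        2 * d * pmax * Real.exp (-(d * bennettH (max (((k : ℝ) - 2 - d) / d) 0))) ∧
    |(∑' t : ℤ, if k ≤ t then binProbOn Finset.univ p t else 0)
        - ∑' t : ℤ, if k ≤ t then binProbOn Finset.univ (fun _ : Fin n => d / n) t else 0| ≤
      d * pmax * Real.exp (-(d * bennettH (max (((k : ℝ) - 2 - d) / d) 0))) := by
  have hn : n ≠ 0 := by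
    rintro rfl
    rw [show (∑ l : Fin 0, p l) = 0 from Finset.sum_empty] at hd
    linarith
  have hnpos : (0 : ℝ) < n := by
    exact_mod_cast Nat.pos_of_ne_zero hn
  have hpmax1 : pmax ≤ 1 := by
    obtain ⟨l1, hl1⟩ := hpmax'
    rw [← hl1]; exact (hp l1).2
  have hpmax0 : 0 ≤ pmax := by
    obtain ⟨l1, hl1⟩ := hpmax'
    rw [← hl1]; exact (hp l1).1
  have hdn0 : 0 ≤ d / n := by positivity
  have hdnpmax : d / n ≤ pmax := by
    rw [div_le_iff₀ hnpos]
    have h1 : ∑ l, p l ≤ ∑ _l : Fin n, pmax := Finset.sum_le_sum fun l _ => hpmax l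
    rw [Finset.sum_const, Finset.card_univ, Fintype.card_fin, nsmul_eq_mul] at h1
    linarith [hd ▸ h1]
  set E := Real.exp (-(d * bennettH (max (((k : ℝ) - 2 - d) / d) 0))) with hEdef
  have hE0 : 0 < E := Real.exp_pos _
  have hsumc : ∑ _l : Fin n, (d / n : ℝ) = d := by
    rw [Finset.sum_const, Finset.card_univ, Fintype.card_fin, nsmul_eq_mul]
    field_simp
  have key : ∀ M : ℕ, ∀ q : Fin n → ℝ, (∀ l, 0 ≤ q l) → (∀ l, q l ≤ pmax) →
      (∑ l, q l = d) → (Finset.univ.filter (fun l => q l ≠ d / n)).card ≤ M →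
      |binProbOn Finset.univ q k - binProbOn Finset.univ (fun _ : Fin n => d / n) k|
        ≤ M * (2 * (d / n * pmax) * E) ∧
      |binTail Finset.univ q k - binTail Finset.univ (fun _ : Fin n => d / n) k|
        ≤ M * (d / n * pmax * E) := by
    intro M
    induction M with
    | zero =>
      intro q h0 h1 hsum hcard
      have hall : ∀ l, q l = d / n := by
        intro l
        by_contra hne
        have hmem : l ∈ Finset.univ.filter (fun l => q l ≠ d / n) :=
          Finset.mem_filter.mpr ⟨Finset.mem_univ _, hne⟩
        have := Finset.card_pos.mpr ⟨l, hmem⟩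
        omega
      have hqc : q = (fun _ : Fin n => d / n) := funext hall
      rw [hqc]
      norm_num
    | succ M ih =>
      intro q h0 h1 hsum hcard
      by_cases hallc : ∀ l, q l = d / n
      · have hqc : q = (fun _ : Fin n => d / n) := funext hallc
        rw [hqc]
        constructor <;> simp <;> positivity
      · push_neg at hallc
        obtain ⟨l0, hl0⟩ := hallc
        obtain ⟨i, hi⟩ : ∃ i, q i < d / n := by
          by_contra h
          push_neg at h
          have hlt : ∑ _l : Fin n, (d / n : ℝ) < ∑ l, q l :=
            Finset.sum_lt_sum (fun l _ => h l)
              ⟨l0, Finset.mem_univ _, lt_of_le_of_ne (h l0) (Ne.symm hl0)⟩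
          rw [hsumc, hsum] at hlt
          exact lt_irrefl _ hlt
        obtain ⟨j, hj⟩ : ∃ j, d / n < q j := by
          by_contra h
          push_neg at h
          have hlt : ∑ l, q l < ∑ _l : Fin n, (d / n : ℝ) :=
            Finset.sum_lt_sum (fun l _ => h l) ⟨i, Finset.mem_univ _, hi⟩
          rw [hsumc, hsum] at hlt
          exact lt_irrefl _ hlt
        have hij : i ≠ j := fun h => by rw [h] at hi; linarith
        have hab : (d / n) + (q i + q j - d / n) = q i + q j := by ring
        have hC : |q i * q j - (d / n) * (q i + q j - d / n)| ≤ d / n * pmax := by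
          have he : q i * q j - (d / n) * (q i + q j - d / n)
              = -((d / n - q i) * (q j - d / n)) := by ring
          rw [he, abs_neg, abs_of_nonneg (by nlinarith)]
          have h1' : d / n - q i ≤ d / n := by linarith [h0 i]
          have h2' : q j - d / n ≤ pmax := by linarith [h1 j]
          nlinarith [h0 i, h1 j]
        have hq01 : ∀ l ∈ Finset.univ, 0 ≤ q l ∧ q l ≤ (1 : ℝ) :=
          fun l _ => ⟨h0 l, (h1 l).trans hpmax1⟩
        obtain ⟨hstep1, hstep2⟩ := step_est hij (Finset.mem_univ i) (Finset.mem_univ j)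
          hq01 hd0 hab hC (le_of_eq hsum) k
        set q' := Function.update (Function.update q i (d / n)) j (q i + q j - d / n) with hq'
        have hq'i : q' i = d / n := by
          rw [hq', Function.update_of_ne hij, Function.update_self]
        have hq'j : q' j = q i + q j - d / n := by rw [hq', Function.update_self]
        have hq'other : ∀ l, l ≠ i → l ≠ j → q' l = q l := by
          intro l hli hlj
          rw [hq', Function.update_of_ne hlj, Function.update_of_ne hli]
        have hq'0 : ∀ l, 0 ≤ q' l := by
          intro l
          rcases eq_or_ne l j with hlj | hlj
          · rw [hlj, hq'j]; linarith [h0 i]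
          · rcases eq_or_ne l i with rfl | hli
            · rw [hq'i]; exact hdn0
            · rw [hq'other l hli hlj]; exact h0 l
        have hq'1 : ∀ l, q' l ≤ pmax := by
          intro l
          rcases eq_or_ne l j with hlj | hlj
          · rw [hlj, hq'j]; linarith [h1 j, hi.le]
          · rcases eq_or_ne l i with rfl | hli
            · rw [hq'i]; exact hdnpmax
            · rw [hq'other l hli hlj]; exact h1 l
        have hq'sum : ∑ l, q' l = d := by
          have e1 : ∑ l, q' l = (q i + q j - d / n) + ∑ l ∈ Finset.univ \ {j},
              Function.update q i (d / n) l := by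
            rw [hq', Finset.sum_update_of_mem (Finset.mem_univ j)]
          have hiuj : i ∈ Finset.univ \ {j} := by
            simp [hij]
          have e2 : ∑ l ∈ Finset.univ \ {j}, Function.update q i (d / n) l
              = (d / n) + ∑ l ∈ (Finset.univ \ {j}) \ {i}, q l := by
            rw [Finset.sum_update_of_mem hiuj]
          have e3 : ∑ l ∈ (Finset.univ \ {j}) \ {i}, q l + q i = ∑ l ∈ Finset.univ \ {j}, q l := by
            rw [Finset.sum_sdiff_eq_sub (Finset.singleton_subset_iff.mpr hiuj)]
            simp
          have e4 : ∑ l ∈ Finset.univ \ {j}, q l + q j = ∑ l, q l := by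
            rw [Finset.sum_sdiff_eq_sub (Finset.singleton_subset_iff.mpr (Finset.mem_univ j))]
            simp
          rw [e1, e2]
          linarith [hsum ▸ e4, e3]
        have hcard' : (Finset.univ.filter (fun l => q' l ≠ d / n)).card ≤ M := by
          have hsubf : Finset.univ.filter (fun l => q' l ≠ d / n)
              ⊆ (Finset.univ.filter (fun l => q l ≠ d / n)).erase i := by
            intro l hl
            rw [Finset.mem_filter] at hl
            rw [Finset.mem_erase, Finset.mem_filter]
            rcases eq_or_ne l i with rfl | hli
            · exact absurd hq'i hl.2
            · refine ⟨hli, Finset.mem_univ _, ?_⟩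
              rcases eq_or_ne l j with rfl | hlj
              · exact hj.ne'
              · intro hql
                exact hl.2 ((hq'other l hli hlj).trans hql)
          have hicard : i ∈ Finset.univ.filter (fun l => q l ≠ d / n) :=
            Finset.mem_filter.mpr ⟨Finset.mem_univ _, hi.ne⟩
          have hle := Finset.card_le_card hsubf
          rw [Finset.card_erase_of_mem hicard] at hle
          omega
        obtain ⟨ih1, ih2⟩ := ih q' hq'0 hq'1 hq'sum hcard'
        constructor
        · have heq : ((M + 1 : ℕ) : ℝ) * (2 * (d / n * pmax) * E)
              = 2 * (d / n * pmax) * E + M * (2 * (d / n * pmax) * E) := by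
            push_cast; ring
          rw [heq]
          calc |binProbOn Finset.univ q k - binProbOn Finset.univ (fun _ : Fin n => d / n) k|
              ≤ |binProbOn Finset.univ q k - binProbOn Finset.univ q' k|
                + |binProbOn Finset.univ q' k
                    - binProbOn Finset.univ (fun _ : Fin n => d / n) k| := abs_sub_le _ _ _
            _ ≤ 2 * (d / n * pmax) * E + M * (2 * (d / n * pmax) * E) := add_le_add hstep1 ih1
        · have heq : ((M + 1 : ℕ) : ℝ) * (d / n * pmax * E)
              = d / n * pmax * E + M * (d / n * pmax * E) := by
            push_cast; ring
          rw [heq]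
          calc |binTail Finset.univ q k - binTail Finset.univ (fun _ : Fin n => d / n) k|
              ≤ |binTail Finset.univ q k - binTail Finset.univ q' k|
                + |binTail Finset.univ q' k
                    - binTail Finset.univ (fun _ : Fin n => d / n) k| := abs_sub_le _ _ _
            _ ≤ d / n * pmax * E + M * (d / n * pmax * E) := add_le_add hstep2 ih2
  have hcardn : (Finset.univ.filter (fun l => p l ≠ d / n)).card ≤ n := by
    have := Finset.card_filter_le Finset.univ (fun l => p l ≠ d / n)
    rwa [Finset.card_univ, Fintype.card_fin] at this
  obtain ⟨h1, h2⟩ := key n p (fun l => (hp l).1) hpmax hd.symm hcardn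
  have hnd : (n : ℝ) * (d / n) = d := by
    rw [mul_comm]; exact div_mul_cancel₀ d hnpos.ne'
  have hn1 : (n : ℝ) * (2 * (d / n * pmax) * E) = 2 * d * pmax * E := by
    linear_combination (2 * pmax * E) * hnd
  have hn2 : (n : ℝ) * (d / n * pmax * E) = d * pmax * E := by
    linear_combination (pmax * E) * hnd
  rw [hn1] at h1
  rw [hn2] at h2
  exact ⟨h1, h2⟩
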